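/- Let G = PSL₂(q), where q ≡ 1 mod 4 and q = p^k for some k ≥ 1 and odd prime p. If i ∈ G is an involution, then there exists g ∈ G such that i·i^g has order p. -/

import Mathlib

/-- `PSL₂(F)`: the quotient of `SL₂(F)` by its center. -/
abbrev PSL2 (F : Type*) [Field F] : Type _ :=
  Matrix.SpecialLinearGroup (Fin 2) F ⧸
    Subgroup.center (Matrix.SpecialLinearGroup (Fin 2) F)

private lemma nilp_pow_eq_zero {p : ℕ} (hp : p.Prime) {R : Type*} [MonoidWithZero R]
    (N : R) (hN : N * N = 0) : N ^ p = 0 := by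
  have h2 : 2 ≤ p := hp.two_le
  have h : N ^ p = N ^ 2 * N ^ (p - 2) := by rw [← pow_add]; congr 1; omega
  rw [h, pow_two, hN, zero_mul]

/-- Let `G = PSL₂(q)`, `q ≡ 1 mod 4`, `q = p^k`, `p` an odd prime,
`k ≥ 1`.  If `i ∈ G` is an involution then there is `g ∈ G` such that `i·i^g` has
order `p`. -/
theorem exists_unipotent_product_of_involutions (p k q : ℕ) (hp : p.Prime) (hpodd : Odd p)
    (hk : 1 ≤ k) (hq : q = p ^ k) (hq4 : q % 4 = 1)
    (F : Type*) [Field F] [Fintype F] (hF : Fintype.card F = q)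
    (i : PSL2 F) (hi : orderOf i = 2) :
    ∃ g : PSL2 F, orderOf (i * (g⁻¹ * i * g)) = p := by
  haveI hpf : Fact p.Prime := ⟨hp⟩
  subst hq
  -- the characteristic of `F` is `p`
  haveI hcharF : CharP F p := by
    have h0 : ((p : F)) ^ k = 0 := by
      have h := FiniteField.cast_card_eq_zero F
      rw [hF] at h
      push_cast at h
      exact h
    have hpF : (p : F) = 0 := (pow_eq_zero_iff (by omega)).mp h0
    have hdvd : ringChar F ∣ p := (CharP.cast_eq_zero_iff F (ringChar F) p).mp hpF
    rcases hp.eq_one_or_self_of_dvd _ hdvd with h1 | h1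
    · exfalso
      have h11 : ((1 : ℕ) : F) = 0 :=
        (CharP.cast_eq_zero_iff F (ringChar F) 1).mpr (by simp [h1])
      simp at h11
    · exact h1 ▸ ringChar.charP F
  have h2ne : (2 : F) ≠ 0 := by
    intro h20
    have h2 : ((2 : ℕ) : F) = 0 := by exact_mod_cast h20
    have hdvd := (CharP.cast_eq_zero_iff F p 2).mp h2
    have hp2 := (Nat.prime_dvd_prime_iff_eq hp Nat.prime_two).mp hdvd
    rw [hp2] at hpodd
    exact absurd (Nat.odd_iff.mp hpodd) (by norm_num)
  -- a square root of -1
  obtain ⟨s, hs⟩ : IsSquare (-1 : F) :=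
    FiniteField.isSquare_neg_one_iff.mpr (by rw [hF]; omega)
  -- hs : -1 = s * s
  have hsne : s ≠ 0 := by
    intro h; rw [h, mul_zero] at hs; exact one_ne_zero (neg_eq_zero.mp hs)
  -- lift the involution
  obtain ⟨A, rfl⟩ := QuotientGroup.mk_surjective i
  have hi2 : ((A : PSL2 F)) ^ 2 = 1 := by
    have h := pow_orderOf_eq_one ((A : PSL2 F))
    rw [hi] at h
    exact h
  have hiner : ((A : PSL2 F)) ≠ 1 := by
    intro h; rw [h, orderOf_one] at hi; omega
  have hAc : A ^ 2 ∈ Subgroup.center (Matrix.SpecialLinearGroup (Fin 2) F) :=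
    (QuotientGroup.eq_one_iff _).mp (by rw [QuotientGroup.mk_pow]; exact hi2)
  obtain ⟨r, hr1, hr2⟩ := Matrix.SpecialLinearGroup.mem_center_iff.mp hAc
  rw [Fintype.card_fin] at hr1
  set a := (A : Matrix (Fin 2) (Fin 2) F) 0 0 with ha
  set b := (A : Matrix (Fin 2) (Fin 2) F) 0 1 with hb
  set c := (A : Matrix (Fin 2) (Fin 2) F) 1 0 with hc
  set d := (A : Matrix (Fin 2) (Fin 2) F) 1 1 with hd'
  have hAA : (A : Matrix (Fin 2) (Fin 2) F) * (A : Matrix (Fin 2) (Fin 2) F)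
      = Matrix.diagonal (fun _ => r) := by
    rw [← Matrix.scalar_apply, hr2, pow_two, Matrix.SpecialLinearGroup.coe_mul]
  have e00 : a * a + b * c = r := by
    have h := congr_fun (congr_fun hAA 0) 0
    simpa [Matrix.mul_apply, Fin.sum_univ_two] using h
  have e01 : a * b + b * d = 0 := by
    have h := congr_fun (congr_fun hAA 0) 1
    simpa [Matrix.mul_apply, Fin.sum_univ_two] using h
  have e10 : c * a + d * c = 0 := by
    have h := congr_fun (congr_fun hAA 1) 0
    simpa [Matrix.mul_apply, Fin.sum_univ_two] using h
  have e11 : c * b + d * d = r := by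
    have h := congr_fun (congr_fun hAA 1) 1
    simpa [Matrix.mul_apply, Fin.sum_univ_two] using h
  have hdet : a * d - b * c = 1 := by
    have h := A.property
    rw [Matrix.det_fin_two] at h
    exact h
  have hrc : r = 1 ∨ r = -1 := by
    apply mul_self_eq_one_iff.mp
    rw [← pow_two]; exact hr1
  -- rule out `A² = 1`
  have hrneg : r = -1 := by
    rcases hrc with h1 | h1
    · exfalso
      subst h1
      by_cases had : a + d = 0
      · exact h2ne (by linear_combination -e00 - hdet + a * had)
      · have hb0 : b = 0 := by
          rcases mul_eq_zero.mp (show b * (a + d) = 0 by linear_combination e01) with h | h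
          · exact h
          · exact absurd h had
        have hc0 : c = 0 := by
          rcases mul_eq_zero.mp (show c * (a + d) = 0 by linear_combination e10) with h | h
          · exact h
          · exact absurd h had
        have ha2 : a * a = 1 := by linear_combination e00 - c * hb0
        have hane : a ≠ 0 := by
          intro h; rw [h, zero_mul] at ha2; exact one_ne_zero ha2.symm
        have hda : d = a := by
          have h1 : a * d = 1 := by linear_combination hdet + b * hc0
          exact mul_left_cancel₀ hane (by rw [h1, ha2])
        apply hiner
        rw [QuotientGroup.eq_one_iff]
        refine Matrix.SpecialLinearGroup.mem_center_iff.mpr ⟨a, ?_, ?_⟩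
        · rw [Fintype.card_fin, pow_two]; exact ha2
        · rw [Matrix.scalar_apply]
          ext i j
          fin_cases i <;> fin_cases j <;>
            simp [Matrix.diagonal, ← ha, ← hb, ← hc, ← hd', hb0, hc0, hda]
    · exact h1
  subst hrneg
  -- trace of A is zero
  have hd : d = -a := by
    by_cases had : a + d = 0
    · linear_combination had
    · exfalso
      have hb0 : b = 0 := by
        rcases mul_eq_zero.mp (show b * (a + d) = 0 by linear_combination e01) with h | h
        · exact h
        · exact absurd h had
      have hc0 : c = 0 := by
        rcases mul_eq_zero.mp (show c * (a + d) = 0 by linear_combination e10) with h | h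
        · exact h
        · exact absurd h had
      have ha2 : a * a = -1 := by linear_combination e00 - c * hb0
      have hane : a ≠ 0 := by
        intro h; rw [h, zero_mul] at ha2
        exact one_ne_zero (neg_eq_zero.mp ha2.symm)
      have hda : d = -a := by
        have h1 : a * d = 1 := by linear_combination hdet + b * hc0
        apply mul_left_cancel₀ hane
        rw [h1]; linear_combination ha2
      exact had (by rw [hda]; ring)
  have key : a * a + b * c = -1 := e00
  have hMeta : (A : Matrix (Fin 2) (Fin 2) F) = !![a, b; c, -a] := by
    rw [← hd, ha, hb, hc, hd']
    exact Matrix.eta_fin_two _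
  -- the two cases
  by_cases hc0 : c = 0
  · -- case c = 0 : use B = [[1,1],[0,1]]
    have keyc : a * a = -1 := by linear_combination key - b * hc0
    set B : Matrix.SpecialLinearGroup (Fin 2) F :=
      ⟨!![(1 : F), 1; 0, 1], by simp [Matrix.det_fin_two_of]⟩ with hB
    have hBinv : B⁻¹ = (⟨!![(1 : F), -1; 0, 1], by simp [Matrix.det_fin_two_of]⟩ :
        Matrix.SpecialLinearGroup (Fin 2) F) := by
      apply inv_eq_of_mul_eq_one_right
      apply Subtype.ext
      show (!![(1 : F), 1; 0, 1] : Matrix (Fin 2) (Fin 2) F) * !![(1 : F), -1; 0, 1] = _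
      ext i j
      fin_cases i <;> fin_cases j <;>
        simp [Matrix.mul_apply, Fin.sum_univ_two, Matrix.one_apply]
    refine ⟨(B : PSL2 F), ?_⟩
    have hprod : (A : PSL2 F) * (((B : PSL2 F))⁻¹ * (A : PSL2 F) * (B : PSL2 F))
        = ((A * (B⁻¹ * A * B) : Matrix.SpecialLinearGroup (Fin 2) F) : PSL2 F) := by
      rw [QuotientGroup.mk_mul, QuotientGroup.mk_mul, QuotientGroup.mk_mul,
        QuotientGroup.mk_inv]
    rw [hprod]
    set C := A * (B⁻¹ * A * B) with hCdef
    have hCmat : (C : Matrix (Fin 2) (Fin 2) F)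
        = !![a, b; c, -a] * (!![(1 : F), -1; 0, 1] * !![a, b; c, -a] * !![(1 : F), 1; 0, 1]) := by
      rw [hCdef, hBinv]
      show (A : Matrix (Fin 2) (Fin 2) F) * (!![(1 : F), -1; 0, 1] * (A : Matrix (Fin 2) (Fin 2) F)
        * (B : Matrix (Fin 2) (Fin 2) F)) = _
      rw [hMeta]
    have hC : (C : Matrix (Fin 2) (Fin 2) F) = !![(-1 : F), -2; 0, -1] := by
      rw [hCmat]
      ext i j
      fin_cases i <;> fin_cases j <;>
        simp [Matrix.mul_apply, Fin.sum_univ_two, hc0] <;>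
        first
          | rfl
          | linear_combination keyc
          | linear_combination -keyc
          | linear_combination 2 * keyc
          | linear_combination -2 * keyc
    -- C^p = -1
    have hNsq : ((C : Matrix (Fin 2) (Fin 2) F) + 1) * ((C : Matrix (Fin 2) (Fin 2) F) + 1)
        = 0 := by
      rw [hC]
      ext i j
      fin_cases i <;> fin_cases j <;>
        simp [Matrix.mul_apply, Fin.sum_univ_two, Matrix.one_apply]
    have hCp : (C : Matrix (Fin 2) (Fin 2) F) ^ p = -1 := by
      have hcm : Commute (-1 : Matrix (Fin 2) (Fin 2) F)
          ((C : Matrix (Fin 2) (Fin 2) F) + 1) := Commute.neg_one_left _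
      have h1 : (C : Matrix (Fin 2) (Fin 2) F)
          = -1 + ((C : Matrix (Fin 2) (Fin 2) F) + 1) := by abel
      rw [h1, add_pow_char_of_commute p hcm, nilp_pow_eq_zero hp _ hNsq,
        hpodd.neg_one_pow, add_zero]
    have hnegdet : Matrix.det (-1 : Matrix (Fin 2) (Fin 2) F) = 1 := by
      rw [show (-1 : Matrix (Fin 2) (Fin 2) F) = -(1 : Matrix (Fin 2) (Fin 2) F) from rfl,
        Matrix.det_neg]
      simp
    have hCpow : C ^ p = (⟨-1, hnegdet⟩ : Matrix.SpecialLinearGroup (Fin 2) F) := by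
      apply Subtype.ext
      rw [Matrix.SpecialLinearGroup.coe_pow]
      exact hCp
    have hCne : ((C : PSL2 F)) ≠ 1 := by
      intro h
      rw [QuotientGroup.eq_one_iff] at h
      obtain ⟨r', _, hr'⟩ := Matrix.SpecialLinearGroup.mem_center_iff.mp h
      have h01 : (Matrix.scalar (Fin 2) r') 0 1 = (C : Matrix (Fin 2) (Fin 2) F) 0 1 :=
        congr_fun (congr_fun hr' 0) 1
      rw [hC, Matrix.scalar_apply, Matrix.diagonal_apply_ne _ (by decide)] at h01
      simp at h01
      exact h2ne (by linear_combination h01)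
    have hCpone : ((C : PSL2 F)) ^ p = 1 := by
      rw [← QuotientGroup.mk_pow, hCpow]
      refine (QuotientGroup.eq_one_iff _).mpr ?_
      refine Matrix.SpecialLinearGroup.mem_center_iff.mpr ⟨-1, by norm_num, ?_⟩
      rw [Matrix.scalar_apply]
      show Matrix.diagonal _ = (-1 : Matrix (Fin 2) (Fin 2) F)
      ext i j
      fin_cases i <;> fin_cases j <;> simp [Matrix.diagonal, Matrix.one_apply]
    exact orderOf_eq_prime hCpone hCne
  · -- case c ≠ 0 : use B = [[1,t],[0,1]] with t = 2s/c
    set t : F := 2 * s / c with ht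
    have hct : c * t = 2 * s := by
      rw [ht]; field_simp
    have hct2 : (c * t) * (c * t) = -4 := by
      rw [hct]; linear_combination (-4 : F) * hs
    set B : Matrix.SpecialLinearGroup (Fin 2) F :=
      ⟨!![(1 : F), t; 0, 1], by simp [Matrix.det_fin_two_of]⟩ with hB
    have hBinv : B⁻¹ = (⟨!![(1 : F), -t; 0, 1], by simp [Matrix.det_fin_two_of]⟩ :
        Matrix.SpecialLinearGroup (Fin 2) F) := by
      apply inv_eq_of_mul_eq_one_right
      apply Subtype.ext
      show (!![(1 : F), t; 0, 1] : Matrix (Fin 2) (Fin 2) F) * !![(1 : F), -t; 0, 1] = _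
      ext i j
      fin_cases i <;> fin_cases j <;>
        simp [Matrix.mul_apply, Fin.sum_univ_two, Matrix.one_apply]
    refine ⟨(B : PSL2 F), ?_⟩
    have hprod : (A : PSL2 F) * (((B : PSL2 F))⁻¹ * (A : PSL2 F) * (B : PSL2 F))
        = ((A * (B⁻¹ * A * B) : Matrix.SpecialLinearGroup (Fin 2) F) : PSL2 F) := by
      rw [QuotientGroup.mk_mul, QuotientGroup.mk_mul, QuotientGroup.mk_mul,
        QuotientGroup.mk_inv]
    rw [hprod]
    set C := A * (B⁻¹ * A * B) with hCdef
    have hCmat : (C : Matrix (Fin 2) (Fin 2) F)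
        = !![a, b; c, -a] * (!![(1 : F), -t; 0, 1] * !![a, b; c, -a] * !![(1 : F), t; 0, 1]) := by
      rw [hCdef, hBinv]
      show (A : Matrix (Fin 2) (Fin 2) F) * (!![(1 : F), -t; 0, 1] * (A : Matrix (Fin 2) (Fin 2) F)
        * (B : Matrix (Fin 2) (Fin 2) F)) = _
      rw [hMeta]
    have hNsq : ((C : Matrix (Fin 2) (Fin 2) F) - 1) * ((C : Matrix (Fin 2) (Fin 2) F) - 1)
        = 0 := by
      rw [hCmat]
      ext i j
      fin_cases i <;> fin_cases j <;>
        simp [Matrix.mul_apply, Fin.sum_univ_two, Matrix.one_apply]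
      · first
        | linear_combination (a*a - 2*a*c*t + b*c - c*c*t*t - 3) * key + (a*c*t + 1) * hct2
        | linear_combination -((a*a - 2*a*c*t + b*c - c*c*t*t - 3) * key + (a*c*t + 1) * hct2)
      · first
        | linear_combination (4*a*a*t - 2*a*c*t*t + 2*b*c*t - 2*c*c*t*t*t - 8*t) * key
          + (a*c*t*t + b*c*t + 2*t) * hct2
        | linear_combination -((4*a*a*t - 2*a*c*t*t + 2*b*c*t - 2*c*c*t*t*t - 8*t) * key
          + (a*c*t*t + b*c*t + 2*t) * hct2)
      · first
        | linear_combination (-2*c*c*t) * key + (c*c*t) * hct2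
        | linear_combination -((-2*c*c*t) * key + (c*c*t) * hct2)
      · first
        | linear_combination (a*a + 2*a*c*t + b*c - 3*c*c*t*t - 3) * key
          + (c*c*t*t - a*c*t + 1) * hct2
        | linear_combination -((a*a + 2*a*c*t + b*c - 3*c*c*t*t - 3) * key
          + (c*c*t*t - a*c*t + 1) * hct2)
    have h10 : (C : Matrix (Fin 2) (Fin 2) F) 1 0 = -(c * (c * t)) := by
      rw [hCmat]
      simp [Matrix.mul_apply, Fin.sum_univ_two]
      ring
    have h10ne : (C : Matrix (Fin 2) (Fin 2) F) 1 0 ≠ 0 := by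
      rw [h10, hct]
      intro h
      rcases mul_eq_zero.mp (neg_eq_zero.mp h) with h' | h'
      · exact hc0 h'
      · rcases mul_eq_zero.mp h' with h'' | h''
        · exact h2ne h''
        · exact hsne h''
    have hCp : (C : Matrix (Fin 2) (Fin 2) F) ^ p = 1 := by
      have hcm : Commute (1 : Matrix (Fin 2) (Fin 2) F)
          ((C : Matrix (Fin 2) (Fin 2) F) - 1) := Commute.one_left _
      have h1 : (C : Matrix (Fin 2) (Fin 2) F)
          = 1 + ((C : Matrix (Fin 2) (Fin 2) F) - 1) := by abel
      rw [h1, add_pow_char_of_commute p hcm, nilp_pow_eq_zero hp _ hNsq,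
        one_pow, add_zero]
    have hCpow : C ^ p = 1 := by
      apply Subtype.ext
      rw [Matrix.SpecialLinearGroup.coe_pow, hCp]
      rfl
    have hCne : ((C : PSL2 F)) ≠ 1 := by
      intro h
      rw [QuotientGroup.eq_one_iff] at h
      obtain ⟨r', _, hr'⟩ := Matrix.SpecialLinearGroup.mem_center_iff.mp h
      have h01 : (Matrix.scalar (Fin 2) r') 1 0 = (C : Matrix (Fin 2) (Fin 2) F) 1 0 :=
        congr_fun (congr_fun hr' 1) 0
      apply h10ne
      rw [← h01, Matrix.scalar_apply, Matrix.diagonal_apply_ne _ (by decide)]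
    have hCpone : ((C : PSL2 F)) ^ p = 1 := by
      rw [← QuotientGroup.mk_pow, hCpow]
      rfl
    exact orderOf_eq_prime hCpone hCne
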